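/- (Merson's Lemma) Let G be a group carrying two Hausdorff group topologies ω ≤ σ (ω coarser than σ). Suppose there is a subgroup H ≤ G such that the subspace topologies induced by ω and σ on H coincide, and the quotient topologies induced by ω and σ on the coset space G/H coincide. Then ω = σ. -/

import Mathlib

open Topology Pointwise


/-- **Merson's Lemma.** Let `G` be a group carrying two Hausdorff group topologies
`ω ≤ σ` (`ω` coarser than `σ`). Suppose there is a subgroup `H ≤ G` such that the subspace
topologies induced by `ω` and `σ` on `H` coincide, and the quotient topologies induced by `ω`
and `σ` on the coset space `G/H` coincide. Then `ω = σ`.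

(In Mathlib's order on `TopologicalSpace G`, "`ω` is coarser than `σ`" is `σ ≤ ω`.) -/
theorem stmt1 {G : Type*} [Group G] (σ ω : TopologicalSpace G)
    (hσgrp : @IsTopologicalGroup G σ _) (hσt2 : @T2Space G σ)
    (hωgrp : @IsTopologicalGroup G ω _) (hωt2 : @T2Space G ω)
    (hcoarser : σ ≤ ω)
    (H : Subgroup G)
    (hsub : TopologicalSpace.induced ((↑) : H → G) ω
      = TopologicalSpace.induced ((↑) : H → G) σ)
    (hquot : TopologicalSpace.coinduced (QuotientGroup.mk : G → G ⧸ H) ω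
      = TopologicalSpace.coinduced (QuotientGroup.mk : G → G ⧸ H) σ) :
    ω = σ := by
  refine IsTopologicalGroup.ext hωgrp hσgrp (le_antisymm ?_ (nhds_mono hcoarser))
  intro U hU
  -- get a σ-open V with 1 ∈ V and V * V ⊆ U
  obtain ⟨V, Vopen, V1, hVV⟩ : ∃ V : Set G, IsOpen[σ] V ∧ (1 : G) ∈ V ∧ V * V ⊆ U := by
    letI := σ; haveI := hσgrp
    exact exists_open_nhds_one_mul_subset hU
  -- subspace condition: find an ω-open O with O ∩ H = V ∩ H
  have hVind : IsOpen[TopologicalSpace.induced ((↑) : H → G) ω]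
      (((↑) : H → G) ⁻¹' V) := by
    rw [hsub]
    exact ⟨V, Vopen, rfl⟩
  obtain ⟨O, Oopen, hO⟩ : ∃ O : Set G, IsOpen[ω] O ∧
      ((↑) : H → G) ⁻¹' O = ((↑) : H → G) ⁻¹' V := isOpen_induced_iff.mp hVind
  have O1 : (1 : G) ∈ O := by
    have : (1 : H) ∈ ((↑) : H → G) ⁻¹' O := by
      rw [hO]; exact Set.mem_preimage.mpr (by simpa using V1)
    simpa using this
  -- get an ω-open O' with 1 ∈ O' and O' * O' ⊆ O
  obtain ⟨O', O'open, O'1, hO'O'⟩ : ∃ O' : Set G, IsOpen[ω] O' ∧ (1 : G) ∈ O' ∧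
      O' * O' ⊆ O := by
    letI := ω; haveI := hωgrp
    exact exists_open_nhds_one_mul_subset (Oopen.mem_nhds O1)
  -- O'⁻¹ is ω-open, hence σ-open
  have O'invopen : IsOpen[ω] O'⁻¹ := by
    letI := ω; haveI := hωgrp
    exact O'open.inv
  set S : Set G := V ∩ O'⁻¹ with hS
  have Sopen : IsOpen[σ] S := by
    letI := σ
    exact Vopen.inter (O'invopen.mono hcoarser)
  -- S * H is ω-open, via the quotient condition
  have hSH : IsOpen[ω] (S * (H : Set G)) := by
    have h1 : IsOpen[TopologicalSpace.coinduced (QuotientGroup.mk : G → G ⧸ H) σ]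
        ((QuotientGroup.mk : G → G ⧸ H) '' S) := by
      rw [isOpen_coinduced, QuotientGroup.preimage_image_mk_eq_mul]
      letI := σ; haveI := hσgrp
      exact Sopen.mul_right
    rw [← hquot, isOpen_coinduced, QuotientGroup.preimage_image_mk_eq_mul] at h1
    exact h1
  -- N := O' ∩ S * H is an ω-open neighborhood of 1 contained in U
  have Nopen : IsOpen[ω] (O' ∩ (S * (H : Set G))) := by
    letI := ω
    exact O'open.inter hSH
  have N1 : (1 : G) ∈ O' ∩ (S * (H : Set G)) := by
    refine ⟨O'1, 1, ⟨V1, by simpa using O'1⟩, 1, H.one_mem, mul_one 1⟩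
  have NsubU : O' ∩ (S * (H : Set G)) ⊆ U := by
    rintro g ⟨hgO', v, ⟨hvV, hvO'⟩, h, hhH, rfl⟩
    have hhO : h ∈ O := hO'O' ⟨v⁻¹, by simpa using hvO', v * h, hgO', by group⟩
    have hhV : h ∈ V := by
      have : (⟨h, hhH⟩ : H) ∈ ((↑) : H → G) ⁻¹' O := hhO
      rw [hO] at this
      exact this
    exact hVV ⟨v, hvV, h, hhV, rfl⟩
  letI := ω
  exact Filter.mem_of_superset (Nopen.mem_nhds N1) NsubU
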